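/- (Summation by parts for difference operators.) Let F : Λ → ℂ be rapidly decreasing (for all N, |F(α)| ≤ C_N/(2|α|+a)^N) and G : Λ → ℂ bounded. Then Σ_{α∈Λ} d_α F(α) D⁺G(α) = −Σ_{α∈Λ} d_α (D⁻ + a)F(α) G(α), where both series converge absolutely. -/

import Mathlib

/-- Summation by parts for the difference operators: if `F` is rapidly decreasing
and `G` is bounded, then `Σ_α d_α F(α) D⁺G(α) = −Σ_α d_α (D⁻ + a)F(α) G(α)`,
both series being absolutely convergent (summable). -/
theorem stmt14 {Λ : Type*} [Countable Λ] (deg : Λ → ℕ) (a : ℕ) (ha : 1 ≤ a)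
    (hfin : ∀ m : ℕ, {α : Λ | deg α = m}.Finite)
    (d : Λ → ℝ) (hd : ∀ α, 0 < d α)
    (hlevel : ∀ m : ℕ,
      (∑ᶠ α ∈ {α : Λ | deg α = m}, d α) ≤ ((m + a - 1) ^ (a - 1) : ℕ))
    (c : Λ → Λ → ℝ) (hcnn : ∀ x y, 0 ≤ c x y)
    (hc0 : ∀ x y, c x y ≠ 0 → deg x = deg y + 1)
    (hplus : ∀ α, (∑ᶠ β, (d β / d α) * c β α) = ((deg α + a : ℕ) : ℝ))
    (hminus : ∀ α, (∑ᶠ β, c α β) = ((deg α : ℕ) : ℝ))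
    (F G : Λ → ℂ)
    (hF : ∀ N : ℕ, ∃ C : ℝ, ∀ α, ‖F α‖ ≤ C / (2 * deg α + a) ^ N)
    (hG : ∃ M : ℝ, ∀ α, ‖G α‖ ≤ M) :
    Summable (fun α => (d α : ℂ) * F α *
      ((∑ᶠ β, ((d β / d α * c β α : ℝ) : ℂ) * G β) - ((deg α + a : ℕ) : ℂ) * G α)) ∧
    Summable (fun α => (d α : ℂ) *
      ((((deg α : ℕ) : ℂ) * F α - ∑ᶠ β, ((c α β : ℝ) : ℂ) * F β) + (a : ℂ) * F α)
      * G α) ∧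
    (∑' α, (d α : ℂ) * F α *
      ((∑ᶠ β, ((d β / d α * c β α : ℝ) : ℂ) * G β) - ((deg α + a : ℕ) : ℂ) * G α))
    = - ∑' α, (d α : ℂ) *
      ((((deg α : ℕ) : ℂ) * F α - ∑ᶠ β, ((c α β : ℝ) : ℂ) * F β) + (a : ℂ) * F α)
      * G α := by
  classical
  obtain ⟨M, hM⟩ := hG
  obtain ⟨C, hC⟩ := hF (a + 2)
  set M' : ℝ := max M 0 with hM'def
  have hM' : ∀ α, ‖G α‖ ≤ M' := fun α => le_trans (hM α) (le_max_left _ _)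
  have hM'0 : 0 ≤ M' := le_max_right _ _
  set C' : ℝ := max C 0 with hC'def
  have hC'0 : 0 ≤ C' := le_max_right _ _
  have ha' : (1 : ℝ) ≤ (a : ℝ) := by exact_mod_cast ha
  have hxpos : ∀ m : ℕ, (0:ℝ) < 2 * (m:ℝ) + a := by
    intro m; have : (0:ℝ) ≤ (m:ℝ) := Nat.cast_nonneg m; linarith
  have hC' : ∀ α, ‖F α‖ ≤ C' / (2 * (deg α : ℝ) + a) ^ (a + 2) := by
    intro α
    refine le_trans (hC α) ?_
    gcongr
    exact le_max_left _ _
  -- the relevant finsets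
  set s : Λ → Finset Λ := fun α => (hfin (deg α + 1)).toFinset with hs_def
  set t : Λ → Finset Λ := fun α => (hfin (deg α - 1)).toFinset with ht_def
  have hs : ∀ α β, β ∉ s α → c β α = 0 := by
    intro α β hβ
    by_contra h
    exact hβ ((hfin (deg α + 1)).mem_toFinset.mpr (hc0 β α h))
  have ht : ∀ α β, β ∉ t α → c α β = 0 := by
    intro α β hβ
    by_contra h
    refine hβ ((hfin (deg α - 1)).mem_toFinset.mpr ?_)
    have h2 := hc0 α β h
    show deg β = deg α - 1
    omega
  -- key finite-sum identities
  have hrow : ∀ α, ∑ β ∈ s α, d β * c β α = d α * ((deg α : ℝ) + a) := by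
    intro α
    have h1 : (∑ᶠ β, (d β / d α) * c β α) = ∑ β ∈ s α, (d β / d α) * c β α := by
      refine finsum_eq_finset_sum_of_support_subset _ ?_
      intro β hβ
      simp only [Function.mem_support] at hβ
      by_contra hβs
      exact hβ (by rw [hs α β hβs, mul_zero])
    have h2 := hplus α
    rw [h1] at h2
    have h3 : ∑ β ∈ s α, d β * c β α = d α * ∑ β ∈ s α, (d β / d α) * c β α := by
      rw [Finset.mul_sum]
      refine Finset.sum_congr rfl fun β _ => ?_
      have hd0 : d α ≠ 0 := (hd α).ne'
      field_simp
    rw [h3, h2]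
    push_cast
    ring
  have hcol : ∀ α, ∑ β ∈ t α, c α β = (deg α : ℝ) := by
    intro α
    have h1 : (∑ᶠ β, c α β) = ∑ β ∈ t α, c α β := by
      refine finsum_eq_finset_sum_of_support_subset _ ?_
      intro β hβ
      simp only [Function.mem_support] at hβ
      by_contra hβs
      exact hβ (ht α β hβs)
    rw [← h1, hminus α]
  -- the weight function and its summability
  set w : Λ → ℝ := fun α => d α * (((deg α : ℝ) + a) * ‖F α‖) with hw_def
  have hw0 : ∀ α, 0 ≤ w α := by
    intro α
    have h1 : (0:ℝ) ≤ (deg α : ℝ) + a := by positivity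
    exact mul_nonneg (hd α).le (mul_nonneg h1 (norm_nonneg _))
  have hFb : ∀ α, ((deg α : ℝ) + a) * ‖F α‖ ≤ C' / (2 * (deg α : ℝ) + a) ^ (a + 1) := by
    intro α
    set x : ℝ := 2 * (deg α : ℝ) + a with hx_def
    have hx : (0:ℝ) < x := hxpos (deg α)
    have h1 : ((deg α : ℝ) + a) * ‖F α‖ ≤ x * (C' / x ^ (a + 2)) := by
      have hdm : (0:ℝ) ≤ (deg α : ℝ) + a := by positivity
      have hle : (deg α : ℝ) + a ≤ x := by
        have : (0:ℝ) ≤ (deg α : ℝ) := Nat.cast_nonneg _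
        simp only [hx_def]; linarith
      calc ((deg α : ℝ) + a) * ‖F α‖ ≤ ((deg α : ℝ) + a) * (C' / x ^ (a + 2)) := by
            exact mul_le_mul_of_nonneg_left (hC' α) hdm
        _ ≤ x * (C' / x ^ (a + 2)) := by
            exact mul_le_mul_of_nonneg_right hle (div_nonneg hC'0 (pow_pos (pow_pos hx (a+2)) 1).le |>.trans_eq (by rw [pow_one]))
    refine h1.trans (le_of_eq ?_)
    rw [pow_succ']
    field_simp
  -- bound for level sums
  have hlevel' : ∀ m : ℕ, ∑ α ∈ (hfin m).toFinset, d α ≤ (2 * (m:ℝ) + a) ^ (a - 1) := by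
    intro m
    have h1 := hlevel m
    rw [← (hfin m).coe_toFinset, finsum_mem_coe_finset] at h1
    refine h1.trans ?_
    have h2 : ((m + a - 1) ^ (a - 1) : ℕ) ≤ ((2 * m + a) ^ (a - 1) : ℕ) :=
      Nat.pow_le_pow_left (by omega) _
    calc (((m + a - 1) ^ (a - 1) : ℕ) : ℝ) ≤ (((2 * m + a) ^ (a - 1) : ℕ) : ℝ) := by
          exact_mod_cast h2
      _ = (2 * (m:ℝ) + a) ^ (a - 1) := by push_cast; ring
  -- summability of w
  have hgsum : Summable (fun m : ℕ => C' / ((m:ℝ) + 1) ^ 2) := by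
    have h := Real.summable_one_div_nat_pow.mpr (one_lt_two (α := ℕ))
    have h2 := (summable_nat_add_iff 1).mpr h
    refine ((h2.mul_left C').congr fun n => ?_)
    push_cast
    ring
  have hg0 : ∀ m : ℕ, 0 ≤ C' / ((m:ℝ) + 1) ^ 2 := by intro m; positivity
  have hkey : ∀ m : ℕ, (2 * (m:ℝ) + a) ^ (a - 1) * (C' / (2 * (m:ℝ) + a) ^ (a + 1))
      ≤ C' / ((m:ℝ) + 1) ^ 2 := by
    intro m
    have hx : (0:ℝ) < 2 * (m:ℝ) + a := hxpos m
    have h1 : (2 * (m:ℝ) + a) ^ (a - 1) * (C' / (2 * (m:ℝ) + a) ^ (a + 1))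
        = C' / (2 * (m:ℝ) + a) ^ 2 := by
      rw [show a + 1 = (a - 1) + 2 by omega, pow_add]
      field_simp
    rw [h1]
    have hle : (m:ℝ) + 1 ≤ 2 * (m:ℝ) + a := by
      have : (0:ℝ) ≤ (m:ℝ) := Nat.cast_nonneg m; linarith
    gcongr
  have hw : Summable w := by
    refine summable_of_sum_le (c := ∑' m : ℕ, C' / ((m:ℝ) + 1) ^ 2) hw0 ?_
    intro u
    have hmaps : ∀ x ∈ u, deg x ∈ u.image deg := fun x hx => Finset.mem_image_of_mem deg hx
    rw [← Finset.sum_fiberwise_of_maps_to hmaps w]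
    have hstep : ∀ m ∈ u.image deg,
        ∑ α ∈ u.filter (fun α => deg α = m), w α ≤ C' / ((m:ℝ) + 1) ^ 2 := by
      intro m _
      have h1 : ∑ α ∈ u.filter (fun α => deg α = m), w α
          ≤ ∑ α ∈ u.filter (fun α => deg α = m), d α * (C' / (2 * (m:ℝ) + a) ^ (a + 1)) := by
        refine Finset.sum_le_sum fun α hα => ?_
        have hm : deg α = m := (Finset.mem_filter.mp hα).2
        have hb := hFb α
        rw [hm] at hb
        show d α * (((deg α : ℝ) + a) * ‖F α‖) ≤ _
        rw [hm]
        exact mul_le_mul_of_nonneg_left hb (hd α).le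
      have h2 : ∑ α ∈ u.filter (fun α => deg α = m), d α * (C' / (2 * (m:ℝ) + a) ^ (a + 1))
          = (∑ α ∈ u.filter (fun α => deg α = m), d α) * (C' / (2 * (m:ℝ) + a) ^ (a + 1)) := by
        rw [Finset.sum_mul]
      have h3 : ∑ α ∈ u.filter (fun α => deg α = m), d α ≤ ∑ α ∈ (hfin m).toFinset, d α := by
        refine Finset.sum_le_sum_of_subset_of_nonneg ?_ (fun α _ _ => (hd α).le)
        intro α hα
        exact (hfin m).mem_toFinset.mpr (Finset.mem_filter.mp hα).2
      have h4 : (0:ℝ) ≤ C' / (2 * (m:ℝ) + a) ^ (a + 1) := by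
        have := hxpos m; positivity
      calc ∑ α ∈ u.filter (fun α => deg α = m), w α
          ≤ (∑ α ∈ u.filter (fun α => deg α = m), d α) * (C' / (2 * (m:ℝ) + a) ^ (a + 1)) := by
            rw [← h2]; exact h1
        _ ≤ (2 * (m:ℝ) + a) ^ (a - 1) * (C' / (2 * (m:ℝ) + a) ^ (a + 1)) := by
            exact mul_le_mul_of_nonneg_right (h3.trans (hlevel' m)) h4
        _ ≤ C' / ((m:ℝ) + 1) ^ 2 := hkey m
    calc ∑ m ∈ u.image deg, ∑ α ∈ u.filter (fun α => deg α = m), w α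
        ≤ ∑ m ∈ u.image deg, C' / ((m:ℝ) + 1) ^ 2 := Finset.sum_le_sum hstep
      _ ≤ ∑' m : ℕ, C' / ((m:ℝ) + 1) ^ 2 := by
          exact Summable.sum_le_tsum (u.image deg) (fun m _ => hg0 m) hgsum
  -- the double-indexed family
  set H : Λ × Λ → ℂ := fun p => ((d p.2 * c p.2 p.1 : ℝ) : ℂ) * F p.1 * G p.2 with hH_def
  have hHnorm_eq : ∀ p : Λ × Λ, ‖H p‖ = d p.2 * c p.2 p.1 * ‖F p.1‖ * ‖G p.2‖ := by
    intro p
    simp only [hH_def, norm_mul, Complex.norm_real, Real.norm_eq_abs]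
    rw [abs_of_nonneg (hd p.2).le, abs_of_nonneg (hcnn p.2 p.1)]
  have hHrow0 : ∀ α β, β ∉ s α → H (α, β) = 0 := by
    intro α β hβ
    simp only [hH_def, hs α β hβ, mul_zero, Complex.ofReal_zero, zero_mul]
  have hHcol0 : ∀ α β, β ∉ t α → H (β, α) = 0 := by
    intro α β hβ
    simp only [hH_def, ht α β hβ, mul_zero, Complex.ofReal_zero, zero_mul]
  have hHnorm : Summable (fun p : Λ × Λ => ‖H p‖) := by
    refine (summable_prod_of_nonneg (fun p => norm_nonneg _)).mpr ⟨?_, ?_⟩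
    · intro α
      refine summable_of_ne_finset_zero (s := s α) fun β hβ => ?_
      rw [hHrow0 α β hβ, norm_zero]
    · refine Summable.of_nonneg_of_le (fun α => tsum_nonneg fun β => norm_nonneg _)
        (fun α => ?_) (hw.mul_left M')
      have h1 : ∑' β, ‖H (α, β)‖ = ∑ β ∈ s α, ‖H (α, β)‖ :=
        tsum_eq_sum fun β hβ => by rw [hHrow0 α β hβ, norm_zero]
      rw [h1]
      have h2 : ∑ β ∈ s α, ‖H (α, β)‖ ≤ ∑ β ∈ s α, d β * c β α * ‖F α‖ * M' := by
        refine Finset.sum_le_sum fun β _ => ?_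
        rw [hHnorm_eq (α, β)]
        exact mul_le_mul_of_nonneg_left (hM' β)
          (mul_nonneg (mul_nonneg (hd β).le (hcnn β α)) (norm_nonneg _))
      refine h2.trans (le_of_eq ?_)
      have h3 : ∑ β ∈ s α, d β * c β α * ‖F α‖ * M'
          = (∑ β ∈ s α, d β * c β α) * (‖F α‖ * M') := by
        rw [Finset.sum_mul]
        refine Finset.sum_congr rfl fun β _ => by ring
      rw [h3, hrow α, hw_def]
      ring
  have hH : Summable H := hHnorm.of_norm
  -- row and column sums
  have hHrowS : ∀ α, Summable (fun β => H (α, β)) := fun α =>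
    summable_of_ne_finset_zero (s := s α) (hHrow0 α)
  have hHcolS : ∀ α, Summable (fun β => H (β, α)) := fun α =>
    summable_of_ne_finset_zero (s := t α) fun β hβ => hHcol0 α β hβ
  set R : Λ → ℂ := fun α => ∑' β, H (α, β) with hR_def
  set Q : Λ → ℂ := fun α => ∑' β, H (β, α) with hQ_def
  have hRhas : HasSum R (∑' p, H p) :=
    HasSum.prod_fiberwise hH.hasSum fun α => (hHrowS α).hasSum
  have hQhas : HasSum Q (∑' p, H p) := by
    have h1 : Summable (fun p : Λ × Λ => H p.swap) := hH.prod_symm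
    have h2 : HasSum Q (∑' p : Λ × Λ, H p.swap) :=
      HasSum.prod_fiberwise h1.hasSum fun α => (hHcolS α).hasSum
    rwa [show (∑' p : Λ × Λ, H p.swap) = ∑' p, H p from (Equiv.prodComm Λ Λ).tsum_eq H] at h2
  have hRsum : Summable R := hRhas.summable
  have hQsum : Summable Q := hQhas.summable
  -- the diagonal term
  set E : Λ → ℂ := fun α => (d α : ℂ) * F α * ((deg α + a : ℕ) : ℂ) * G α with hE_def
  have hE : Summable E := by
    refine Summable.of_norm_bounded (hw.mul_left M') fun α => ?_
    simp only [hE_def, norm_mul, Complex.norm_real, Real.norm_eq_abs, Complex.norm_natCast]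
    rw [abs_of_nonneg (hd α).le]
    have h1 : ((deg α + a : ℕ) : ℝ) = (deg α : ℝ) + a := by push_cast; ring
    rw [h1]
    have := hM' α
    have h2 : (0:ℝ) ≤ d α * ‖F α‖ * ((deg α : ℝ) + a) :=
      mul_nonneg (mul_nonneg (hd α).le (norm_nonneg _)) (by positivity)
    calc d α * ‖F α‖ * ((deg α : ℝ) + a) * ‖G α‖
        ≤ d α * ‖F α‖ * ((deg α : ℝ) + a) * M' := mul_le_mul_of_nonneg_left this h2
      _ = M' * w α := by rw [hw_def]; ring
  -- identify the LHS summand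
  have hLR : ∀ α, (d α : ℂ) * F α *
      ((∑ᶠ β, ((d β / d α * c β α : ℝ) : ℂ) * G β) - ((deg α + a : ℕ) : ℂ) * G α)
      = R α - E α := by
    intro α
    have hd0 : (d α : ℝ) ≠ 0 := (hd α).ne'
    have hfs : (∑ᶠ β, ((d β / d α * c β α : ℝ) : ℂ) * G β)
        = ∑ β ∈ s α, ((d β / d α * c β α : ℝ) : ℂ) * G β := by
      refine finsum_eq_finset_sum_of_support_subset _ ?_
      intro β hβ
      simp only [Function.mem_support] at hβ
      by_contra hβs
      exact hβ (by rw [hs α β hβs, mul_zero, Complex.ofReal_zero, zero_mul])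
    have hRα : R α = ∑ β ∈ s α, H (α, β) := by
      rw [hR_def]
      exact tsum_eq_sum fun β hβ => hHrow0 α β hβ
    rw [hfs, hRα, mul_sub, Finset.mul_sum]
    have hterm : ∀ β ∈ s α,
        (d α : ℂ) * F α * (((d β / d α * c β α : ℝ) : ℂ) * G β) = H (α, β) := by
      intro β _
      rw [hH_def]
      have h1 : (d α : ℝ) * (d β / d α * c β α) = d β * c β α := by
        field_simp
      calc (d α : ℂ) * F α * (((d β / d α * c β α : ℝ) : ℂ) * G β)
          = ((d α : ℝ) * (d β / d α * c β α) : ℝ) * F α * G β := by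
            push_cast; ring
        _ = ((d β * c β α : ℝ) : ℂ) * F α * G β := by rw [h1]
    rw [Finset.sum_congr rfl hterm, hE_def]
    ring
  -- identify the RHS summand
  have hPQ : ∀ α, (d α : ℂ) *
      ((((deg α : ℕ) : ℂ) * F α - ∑ᶠ β, ((c α β : ℝ) : ℂ) * F β) + (a : ℂ) * F α) * G α
      = E α - Q α := by
    intro α
    have hfs : (∑ᶠ β, ((c α β : ℝ) : ℂ) * F β)
        = ∑ β ∈ t α, ((c α β : ℝ) : ℂ) * F β := by
      refine finsum_eq_finset_sum_of_support_subset _ ?_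
      intro β hβ
      simp only [Function.mem_support] at hβ
      by_contra hβs
      exact hβ (by rw [ht α β hβs, Complex.ofReal_zero, zero_mul])
    have hQα : Q α = ∑ β ∈ t α, H (β, α) := by
      rw [hQ_def]
      exact tsum_eq_sum fun β hβ => hHcol0 α β hβ
    have hterm : ∀ β ∈ t α,
        (d α : ℂ) * (((c α β : ℝ) : ℂ) * F β) * G α = H (β, α) := by
      intro β _
      rw [hH_def]
      push_cast
      ring
    have hsum : (d α : ℂ) * (∑ β ∈ t α, ((c α β : ℝ) : ℂ) * F β) * G α
        = ∑ β ∈ t α, H (β, α) := by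
      rw [Finset.mul_sum, Finset.sum_mul]
      exact Finset.sum_congr rfl fun β hβ => hterm β hβ
    rw [hfs, hQα, ← hsum, hE_def]
    push_cast
    ring
  -- assemble
  have hLsum : Summable (fun α => (d α : ℂ) * F α *
      ((∑ᶠ β, ((d β / d α * c β α : ℝ) : ℂ) * G β) - ((deg α + a : ℕ) : ℂ) * G α)) := by
    refine (hRsum.sub hE).congr fun α => (hLR α).symm
  have hPsum : Summable (fun α => (d α : ℂ) *
      ((((deg α : ℕ) : ℂ) * F α - ∑ᶠ β, ((c α β : ℝ) : ℂ) * F β) + (a : ℂ) * F α) * G α) := by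
    refine (hE.sub hQsum).congr fun α => (hPQ α).symm
  refine ⟨hLsum, hPsum, ?_⟩
  have h1 : (∑' α, (d α : ℂ) * F α *
      ((∑ᶠ β, ((d β / d α * c β α : ℝ) : ℂ) * G β) - ((deg α + a : ℕ) : ℂ) * G α))
      = ∑' α, (R α - E α) := tsum_congr hLR
  have h2 : (∑' α, (d α : ℂ) *
      ((((deg α : ℕ) : ℂ) * F α - ∑ᶠ β, ((c α β : ℝ) : ℂ) * F β) + (a : ℂ) * F α) * G α)
      = ∑' α, (E α - Q α) := tsum_congr hPQ
  rw [h1, h2, hRsum.tsum_sub hE, hE.tsum_sub hQsum, hRhas.tsum_eq, hQhas.tsum_eq]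
  ring
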